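/- For every positive integer k, the number of natural numbers n with n < 2·3^(k-1) such that the digit 0 occurs nowhere in the last k ternary digits of 2^n (i.e., (2^n / 3^i) % 3 ≠ 0 for all i < k) equals 2^k. -/

import Mathlib

private lemma digit_mod (a : ℕ) {i k : ℕ} (h : i < k) :
    a % 3 ^ k / 3 ^ i % 3 = a / 3 ^ i % 3 := by
  rw [← Nat.mod_mul_right_div_self, ← Nat.mod_mul_right_div_self, ← pow_succ,
    Nat.mod_mod_of_dvd _ (pow_dvd_pow 3 h)]

private lemma lemA (j : ℕ) : ∃ m, 2 ^ (2 * 3 ^ j) = 1 + 3 ^ (j + 1) * m ∧ ¬ 3 ∣ m := by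
  induction j with
  | zero => exact ⟨1, by norm_num⟩
  | succ j ih =>
    obtain ⟨m, hm, h3⟩ := ih
    refine ⟨m + 3 * (3 ^ j * m ^ 2 + (3 ^ j) ^ 2 * m ^ 3), ?_, ?_⟩
    · have h1 : 2 ^ (2 * 3 ^ (j + 1)) = (2 ^ (2 * 3 ^ j)) ^ 3 := by
        rw [← pow_mul]; ring_nf
      rw [h1, hm, pow_succ, pow_succ]
      ring
    · intro h
      exact h3 (by omega)

private lemma pow_eq_one_iff_modeq (M d : ℕ) [NeZero M] :
    (2 : ZMod M) ^ d = 1 ↔ (2 : ℕ) ^ d ≡ 1 [MOD M] := by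
  rw [← ZMod.natCast_eq_natCast_iff]
  push_cast
  rfl

private lemma ord2 (j : ℕ) : orderOf (2 : ZMod (3 ^ (j + 1))) = 2 * 3 ^ j := by
  haveI : NeZero (3 ^ (j + 1)) := ⟨by positivity⟩
  obtain ⟨m, hm, h3⟩ := lemA j
  have hone : (2 : ZMod (3 ^ (j + 1))) ^ (2 * 3 ^ j) = 1 := by
    rw [pow_eq_one_iff_modeq, hm]
    have : (3:ℕ) ^ (j+1) * m ≡ 0 [MOD 3 ^ (j+1)] := (Nat.modEq_zero_iff_dvd).mpr ⟨m, rfl⟩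
    simpa using (Nat.ModEq.refl 1).add this
  have hdvd : orderOf (2 : ZMod (3 ^ (j + 1))) ∣ 2 * 3 ^ j := orderOf_dvd_of_pow_eq_one hone
  set d := orderOf (2 : ZMod (3 ^ (j + 1))) with hd
  have hmodd : (2 : ℕ) ^ d ≡ 1 [MOD 3 ^ (j + 1)] :=
    (pow_eq_one_iff_modeq _ _).mp (pow_orderOf_eq_one _)
  have heven : 2 ∣ d := by
    by_contra hodd
    have hodd' : Odd d := Nat.odd_iff.mpr (by omega)
    obtain ⟨t, ht⟩ := hodd'
    rw [ht] at hmodd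
    have h4 : (2:ℕ) ^ (2 * t + 1) ≡ 2 [MOD 3] := by
      calc (2:ℕ) ^ (2 * t + 1) = 4 ^ t * 2 := by rw [pow_succ, pow_mul]; norm_num
      _ ≡ 1 ^ t * 2 [MOD 3] := Nat.ModEq.mul (Nat.ModEq.pow t (by decide)) (Nat.ModEq.refl 2)
      _ = 2 := by rw [one_pow, one_mul]
    have hmod3 : (2:ℕ) ^ (2 * t + 1) ≡ 1 [MOD 3] :=
      hmodd.of_dvd (dvd_pow_self 3 (Nat.succ_ne_zero j))
    have : (2:ℕ) ≡ 1 [MOD 3] := h4.symm.trans hmod3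
    simp [Nat.ModEq] at this
  have hpow3 : 3 ^ j ∣ d := by
    by_contra h3d
    obtain ⟨a, b, ha, hb, hab⟩ := exists_dvd_and_dvd_of_dvd_mul hdvd
    obtain ⟨i, hij, rfl⟩ := (Nat.dvd_prime_pow Nat.prime_three).mp hb
    have hilt : i < j := by
      rcases Nat.lt_or_ge i j with h | h
      · exact h
      · exfalso; exact h3d (hab ▸ Dvd.dvd.mul_left (pow_dvd_pow 3 (le_antisymm hij h ▸ le_refl j)) a)
    obtain ⟨jp, rfl⟩ : ∃ jp, j = jp + 1 := ⟨j - 1, by omega⟩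
    have hdd : d ∣ 2 * 3 ^ jp := by
      rw [hab]
      exact mul_dvd_mul ha (pow_dvd_pow 3 (by omega))
    have hone' : (2:ℕ) ^ (2 * 3 ^ jp) ≡ 1 [MOD 3 ^ (jp + 2)] := by
      have := orderOf_dvd_iff_pow_eq_one.mp (hd ▸ hdd)
      exact (pow_eq_one_iff_modeq _ _).mp this
    obtain ⟨m', hm', h3'⟩ := lemA jp
    rw [hm'] at hone'
    have hdvd' : 3 ^ (jp + 2) ∣ 3 ^ (jp + 1) * m' := by
      have := (Nat.modEq_iff_dvd' (Nat.le_add_right 1 _)).mp hone'.symm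
      simpa using this
    have : 3 ∣ m' := by
      rcases hdvd' with ⟨c, hc⟩
      have : 3 ^ (jp+1) * m' = 3 ^ (jp+1) * (3 * c) := by rw [hc]; ring
      exact ⟨c, Nat.eq_of_mul_eq_mul_left (by positivity) this⟩
    exact h3' this
  have hcop : Nat.Coprime 2 (3 ^ j) := Nat.Coprime.pow_right _ (by decide)
  exact Nat.dvd_antisymm hdvd (hcop.mul_dvd_of_dvd_of_dvd heven hpow3)

private lemma countS (k : ℕ) :
    ((Finset.range (3 ^ k)).filter (fun r => ∀ i < k, r / 3 ^ i % 3 ≠ 0)).card = 2 ^ k := by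
  induction k with
  | zero => simp
  | succ k ih =>
    have hcard : (((Finset.range (3 ^ k)).filter (fun r => ∀ i < k, r / 3 ^ i % 3 ≠ 0)) ×ˢ
        ({1, 2} : Finset ℕ)).card = 2 ^ (k + 1) := by
      rw [Finset.card_product, ih]
      simp [pow_succ]
    rw [← hcard]
    refine Finset.card_bij' (fun r _ => (r / 3, r % 3)) (fun p _ => 3 * p.1 + p.2) ?_ ?_ ?_ ?_
    · intro r hr
      simp only [Finset.mem_filter, Finset.mem_range] at hr
      obtain ⟨hlt, hdig⟩ := hr
      refine Finset.mem_product.mpr ⟨Finset.mem_filter.mpr ⟨Finset.mem_range.mpr ?_, ?_⟩, ?_⟩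
      · exact Nat.div_lt_of_lt_mul (by rw [← pow_succ']; exact hlt)
      · intro i hi
        have := hdig (i + 1) (by omega)
        rw [Nat.div_div_eq_div_mul, ← pow_succ']
        exact this
      · have h0 := hdig 0 (by omega)
        simp only [pow_zero, Nat.div_one] at h0
        have : r % 3 < 3 := Nat.mod_lt _ (by norm_num)
        simp only [Finset.mem_insert, Finset.mem_singleton]
        omega
    · intro p hp
      beta_reduce
      obtain ⟨hp1, hp2⟩ := Finset.mem_product.mp hp
      simp only [Finset.mem_filter, Finset.mem_range] at hp1
      simp only [Finset.mem_insert, Finset.mem_singleton] at hp2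
      obtain ⟨ha, hdig⟩ := hp1
      refine Finset.mem_filter.mpr ⟨Finset.mem_range.mpr ?_, ?_⟩
      · have : p.2 < 3 := by omega
        calc 3 * p.1 + p.2 < 3 * p.1 + 3 := by omega
        _ ≤ 3 * 3 ^ k := by omega
        _ = 3 ^ (k + 1) := (pow_succ' 3 k).symm
      · intro i hi
        have hdiv : (3 * p.1 + p.2) / 3 = p.1 := by omega
        match i with
        | 0 => simp only [pow_zero, Nat.div_one]; omega
        | Nat.succ i' =>
          rw [pow_succ', ← Nat.div_div_eq_div_mul, hdiv]
          exact hdig i' (by omega)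
    · intro r hr
      beta_reduce
      omega
    · intro p hp
      beta_reduce
      obtain ⟨hp1, hp2⟩ := Finset.mem_product.mp hp
      simp only [Finset.mem_insert, Finset.mem_singleton] at hp2
      have : (3 * p.1 + p.2) / 3 = p.1 := by omega
      have h2 : (3 * p.1 + p.2) % 3 = p.2 := by omega
      simp [this, h2]

private lemma countU (k : ℕ) :
    ((Finset.range (3 ^ (k + 1))).filter (fun r => ¬ 3 ∣ r)).card = 2 * 3 ^ k := by
  have hcard : ((Finset.range (3 ^ k)) ×ˢ ({1, 2} : Finset ℕ)).card = 2 * 3 ^ k := by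
    rw [Finset.card_product, Finset.card_range]
    simp [mul_comm]
  rw [← hcard]
  refine Finset.card_bij' (fun r _ => (r / 3, r % 3)) (fun p _ => 3 * p.1 + p.2) ?_ ?_ ?_ ?_
  · intro r hr
    simp only [Finset.mem_filter, Finset.mem_range] at hr
    obtain ⟨hlt, hnd⟩ := hr
    refine Finset.mem_product.mpr ⟨Finset.mem_range.mpr ?_, ?_⟩
    · exact Nat.div_lt_of_lt_mul (by rw [← pow_succ']; exact hlt)
    · have : r % 3 ≠ 0 := fun h => hnd (Nat.dvd_of_mod_eq_zero h)
      have : r % 3 < 3 := Nat.mod_lt _ (by norm_num)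
      simp only [Finset.mem_insert, Finset.mem_singleton]
      omega
  · intro p hp
    beta_reduce
    obtain ⟨hp1, hp2⟩ := Finset.mem_product.mp hp
    simp only [Finset.mem_range] at hp1
    simp only [Finset.mem_insert, Finset.mem_singleton] at hp2
    refine Finset.mem_filter.mpr ⟨Finset.mem_range.mpr ?_, ?_⟩
    · calc 3 * p.1 + p.2 < 3 * p.1 + 3 := by omega
      _ ≤ 3 * 3 ^ k := by omega
      _ = 3 ^ (k + 1) := (pow_succ' 3 k).symm
    · intro hdvd
      obtain ⟨c, hc⟩ := hdvd
      omega
  · intro r hr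
    beta_reduce
    omega
  · intro p hp
    beta_reduce
    obtain ⟨hp1, hp2⟩ := Finset.mem_product.mp hp
    simp only [Finset.mem_insert, Finset.mem_singleton] at hp2
    have h1 : (3 * p.1 + p.2) / 3 = p.1 := by omega
    have h2 : (3 * p.1 + p.2) % 3 = p.2 := by omega
    simp [h1, h2]



/-- For every positive integer `k`, the number of naturals `n < 2 * 3 ^ (k - 1)` such that
the digit `0` occurs nowhere in the last `k` ternary digits of `2 ^ n` equals `2 ^ k`. -/
theorem card_two_pow_trailing_no_zero (k : ℕ) (hk : 0 < k) :
    ((Finset.range (2 * 3 ^ (k - 1))).filter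
      (fun n => ∀ i < k, 2 ^ n / 3 ^ i % 3 ≠ 0)).card = 2 ^ k := by
  obtain ⟨K, rfl⟩ : ∃ K, k = K + 1 := ⟨k - 1, by omega⟩
  simp only [Nat.add_sub_cancel]
  haveI : NeZero (3 ^ (K + 1)) := ⟨by positivity⟩
  have hMpos : 0 < 3 ^ (K + 1) := by positivity
  -- injectivity of n ↦ 2^n % 3^(K+1) on range (2 * 3^K)
  have hinj : ∀ n₁ < 2 * 3 ^ K, ∀ n₂ < 2 * 3 ^ K,
      2 ^ n₁ % 3 ^ (K + 1) = 2 ^ n₂ % 3 ^ (K + 1) → n₁ = n₂ := by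
    have key : ∀ n₁ n₂, n₁ ≤ n₂ → n₂ - n₁ < 2 * 3 ^ K →
        2 ^ n₁ % 3 ^ (K + 1) = 2 ^ n₂ % 3 ^ (K + 1) → n₁ = n₂ := by
      intro n₁ n₂ hle hlt heq
      have hmod : (2 : ℕ) ^ n₁ ≡ 2 ^ n₂ [MOD 3 ^ (K + 1)] := heq
      have hsplit : (2 : ℕ) ^ n₁ * 2 ^ (n₂ - n₁) = 2 ^ n₂ := by
        rw [← pow_add]; congr 1; omega
      have hmod2 : (2 : ℕ) ^ n₁ * 1 ≡ 2 ^ n₁ * 2 ^ (n₂ - n₁) [MOD 3 ^ (K + 1)] := by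
        rw [mul_one, hsplit]; exact hmod
      have hcop : Nat.Coprime (2 ^ n₁) (3 ^ (K + 1)) :=
        Nat.Coprime.pow _ _ (by decide)
      have h1 : (1 : ℕ) ≡ 2 ^ (n₂ - n₁) [MOD 3 ^ (K + 1)] :=
        hmod2.cancel_left_of_coprime hcop.symm
      have hz : (2 : ZMod (3 ^ (K + 1))) ^ (n₂ - n₁) = 1 :=
        (pow_eq_one_iff_modeq _ _).mpr h1.symm
      have hd : orderOf (2 : ZMod (3 ^ (K + 1))) ∣ (n₂ - n₁) :=
        orderOf_dvd_of_pow_eq_one hz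
      rw [ord2] at hd
      rcases Nat.eq_zero_or_pos (n₂ - n₁) with h | h
      · omega
      · exact absurd (Nat.le_of_dvd h hd) (by omega)
    intro n₁ h₁ n₂ h₂ heq
    rcases le_total n₁ n₂ with h | h
    · exact key _ _ h (by omega) heq
    · exact (key _ _ h (by omega) heq.symm).symm
  -- the image of range (2*3^K) under n ↦ 2^n % 3^(K+1) is exactly the non-multiples of 3
  have himg : (Finset.range (2 * 3 ^ K)).image (fun n => 2 ^ n % 3 ^ (K + 1)) =
      (Finset.range (3 ^ (K + 1))).filter (fun r => ¬ 3 ∣ r) := by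
    apply Finset.eq_of_subset_of_card_le
    · intro r hr
      simp only [Finset.mem_image, Finset.mem_range] at hr
      obtain ⟨n, hn, rfl⟩ := hr
      refine Finset.mem_filter.mpr ⟨Finset.mem_range.mpr (Nat.mod_lt _ hMpos), ?_⟩
      intro h3
      have h2n : 3 ∣ 2 ^ n :=
        (Nat.dvd_mod_iff (dvd_pow_self 3 (Nat.succ_ne_zero K))).mp h3
      have := Nat.Prime.dvd_of_dvd_pow Nat.prime_three h2n
      omega
    · rw [countU]
      have : ((Finset.range (2 * 3 ^ K)).image (fun n => 2 ^ n % 3 ^ (K + 1))).card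
          = 2 * 3 ^ K := by
        rw [Finset.card_image_of_injOn, Finset.card_range]
        intro a ha b hb hab
        exact hinj a (Finset.mem_range.mp ha) b (Finset.mem_range.mp hb) hab
      omega
  rw [← countS (K + 1)]
  refine Finset.card_bij (fun n _ => 2 ^ n % 3 ^ (K + 1)) ?_ ?_ ?_
  · intro n hn
    simp only [Finset.mem_filter, Finset.mem_range] at hn ⊢
    exact ⟨Nat.mod_lt _ hMpos, fun i hi => by
      rw [digit_mod _ hi]; exact hn.2 i hi⟩
  · intro a ha b hb h
    simp only [Finset.mem_filter, Finset.mem_range] at ha hb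
    exact hinj a ha.1 b hb.1 h
  · intro r hr
    simp only [Finset.mem_filter, Finset.mem_range] at hr
    have hrU : r ∈ (Finset.range (3 ^ (K + 1))).filter (fun r => ¬ 3 ∣ r) := by
      refine Finset.mem_filter.mpr ⟨Finset.mem_range.mpr hr.1, ?_⟩
      intro h3
      have h0 := hr.2 0 (Nat.succ_pos K)
      simp only [pow_zero, Nat.div_one] at h0
      obtain ⟨c, rfl⟩ := h3
      exact h0 (Nat.mul_mod_right 3 c)
    rw [← himg] at hrU
    obtain ⟨n, hn, hnr⟩ := Finset.mem_image.mp hrU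
    refine ⟨n, Finset.mem_filter.mpr ⟨hn, fun i hi => ?_⟩, hnr⟩
    rw [← digit_mod (2 ^ n) hi, hnr]
    exact hr.2 i hi
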